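/- Let B⁽⁰⁾, B⁽¹⁾, …, B⁽ᵏ⁾ be operator-collections and let 0 ≤ μ' < μ. Then the iterated commutator operator-collection satisfies ||ad_{B⁽ᵏ⁾} ⋯ ad_{B⁽¹⁾}(B⁽⁰⁾)||_{μ'} ≤ (k+1)!·(2e)^k / (μ−μ')^{k+1} · ∏_{t=0}^k ||B⁽ᵗ⁾||_μ. -/

import Mathlib

open scoped BigOperators
set_option linter.unusedSectionVars false
open Matrix

noncomputable section

namespace QLDPC

open scoped Classical

/-- The four Pauli matrices 1, X, Y, Z. -/
def pauliMat : Fin 4 → Matrix (Fin 2) (Fin 2) ℂ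
  | 0 => 1
  | 1 => !![0, 1; 1, 0]
  | 2 => !![0, -Complex.I; Complex.I, 0]
  | 3 => !![1, 0; 0, -1]

variable {Λ E : Type}

/-- Operators on the Hilbert space (ℂ²)^{⊗Λ}. -/
abbrev Op (Λ : Type) [Fintype Λ] [DecidableEq Λ] := Matrix (Λ → Fin 2) (Λ → Fin 2) ℂ

/-- The operator of a Pauli string `p : Λ → Fin 4`. -/
def pauliOp [Fintype Λ] [DecidableEq Λ] (p : Λ → Fin 4) : Op Λ :=
  fun f g => ∏ x, pauliMat (p x) (f x) (g x)

/-- Qubit support of a Pauli string. -/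
def psupp [Fintype Λ] (p : Λ → Fin 4) : Finset Λ :=
  Finset.univ.filter fun x => p x ≠ 0

/-- The operator norm (largest singular value). -/
def opNorm [Fintype Λ] [DecidableEq Λ] (A : Op Λ) : ℝ :=
  ‖Matrix.toEuclideanCLM (𝕜 := ℂ) A‖

/-- Coefficient of the Pauli string `p` in the Pauli-basis expansion of `A`. -/
def pauliCoeff [Fintype Λ] [DecidableEq Λ] (A : Op Λ) (p : Λ → Fin 4) : ℂ :=
  Matrix.trace (pauliOp p * A) / ((2 : ℂ) ^ Fintype.card Λ)

/-- Qubit support of a general operator, via its Pauli expansion. -/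
def opSupp [Fintype Λ] [DecidableEq Λ] (A : Op Λ) : Set Λ :=
  {x | ∃ p : Λ → Fin 4, pauliCoeff A p ≠ 0 ∧ p x ≠ 0}

/-- The data of a family of stabilizer checks: each check is a signed Pauli string. -/
structure Checks (Λ E : Type) where
  str : E → Λ → Fin 4
  sgn : E → Bool

variable [Fintype Λ] [DecidableEq Λ] [Fintype E]

/-- The operator of check α. -/
def checkOp (K : Checks Λ E) (α : E) : Op Λ :=
  (if K.sgn α then (-1 : ℂ) else 1) • pauliOp (K.str α)

/-- G_α = (1 + C_α)/2. -/
def Gop (K : Checks Λ E) (α : E) : Op Λ := (2⁻¹ : ℂ) • (1 + checkOp K α)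

/-- E_α = (1 - C_α)/2. -/
def Eop (K : Checks Λ E) (α : E) : Op Λ := (2⁻¹ : ℂ) • (1 - checkOp K α)

/-- The stabilizer Hamiltonian H₀ = Σ_α E_α. -/
def H0 (K : Checks Λ E) : Op Λ := ∑ α, Eop K α

/-- The stabilizer group 𝒢 generated by the checks (as a submonoid; each check squares to 1). -/
def stab (K : Checks Λ E) : Submonoid (Op Λ) :=
  Submonoid.closure (Set.range (checkOp K))

/-- All checks pairwise commute (𝒢 abelian). -/
def CommChecks (K : Checks Λ E) : Prop := ∀ α β, Commute (checkOp K α) (checkOp K β)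

/-- Check support of a qubit. -/
def suppC (K : Checks Λ E) (x : Λ) : Finset E :=
  Finset.univ.filter fun α => x ∈ psupp (K.str α)

/-- The qubit interaction graph. -/
def qubitGraph (K : Checks Λ E) : SimpleGraph Λ :=
  SimpleGraph.fromRel fun x y => ∃ α, x ∈ psupp (K.str α) ∧ y ∈ psupp (K.str α)

/-- The check interaction graph. -/
def checkGraph (K : Checks Λ E) : SimpleGraph E :=
  SimpleGraph.fromRel fun α β => (psupp (K.str α) ∩ psupp (K.str β)).Nonempty

/-- `y` lies in the (closed) ball of radius `r` around `x` in the graph `G`. -/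
def inBall {V : Type} (G : SimpleGraph V) (x y : V) (r : ℝ) : Prop :=
  G.Reachable x y ∧ (G.dist x y : ℝ) ≤ r

/-- Ball in the qubit graph. -/
def ballQ (K : Checks Λ E) (x : Λ) (r : ℝ) : Finset Λ :=
  Finset.univ.filter fun y => inBall (qubitGraph K) x y r

/-- Ball in the check graph. -/
def ballC (K : Checks Λ E) (α : E) (r : ℝ) : Finset E :=
  Finset.univ.filter fun β => inBall (checkGraph K) α β r

/-- Ball of radius `r` around a set of checks. -/
def ballCS (K : Checks Λ E) (S : Finset E) (r : ℝ) : Finset E :=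
  Finset.univ.filter fun β => ∃ α ∈ S, inBall (checkGraph K) α β r

/-- Growth of balls condition: |B_r| ≤ e^{κ r} on both graphs. -/
def BallGrowth (K : Checks Λ E) (κ : ℝ) : Prop :=
  (∀ (x : Λ) (r : ℝ), ((ballQ K x r).card : ℝ) ≤ Real.exp (κ * r)) ∧
  (∀ (α : E) (r : ℝ), ((ballC K α r).card : ℝ) ≤ Real.exp (κ * r))

/-- A finite set is connected in a graph if the induced subgraph is connected. -/
def ConnIn {V : Type} (G : SimpleGraph V) (S : Finset V) : Prop :=
  (G.induce (S : Set V)).Connected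

/-- Qubit support of a set of checks. -/
def suppSet (K : Checks Λ E) (S : Finset E) : Set Λ :=
  ↑(S.biUnion fun α => psupp (K.str α))

variable [LinearOrder E]

/-- Ordered product of operators over a finite set of check labels. -/
def ordProd (S : Finset E) (f : E → Op Λ) : Op Λ :=
  ((S.sort (· ≤ ·)).map f).prod

/-- The codespace projector P = ∏_α G_α (for commuting checks). -/
def Pmat (K : Checks Λ E) : Op Λ := ordProd Finset.univ (Gop K)

/-- The code distance: minimal support of a Pauli string p with P p P not proportional to P. -/
def codeDist (K : Checks Λ E) : ℕ :=
  sInf ((fun p => (psupp p).card) ''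
    {p : Λ → Fin 4 | ¬∃ cc : ℂ, Pmat K * pauliOp p * Pmat K = cc • Pmat K})

/-- TQO-I: Pauli strings of weight below the code distance commuting with 𝒢 belong to 𝒢. -/
def TQO1 (K : Checks Λ E) : Prop :=
  ∀ p : Λ → Fin 4, (psupp p).card < codeDist K →
    (∀ g ∈ stab K, Commute (pauliOp p) g) → pauliOp p ∈ stab K

/-- TQO-II: group elements locally supported on a small connected check set S are generated by
checks within distance ℓ|S| of S. -/
def TQO2 (K : Checks Λ E) (ℓ dtil : ℝ) : Prop :=
  ∀ S : Finset E, ConnIn (checkGraph K) S → (S.card : ℝ) < dtil →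
    ∀ g ∈ stab K, opSupp (g : Op Λ) ⊆ suppSet K S →
      (g : Op Λ) ∈ Submonoid.closure (checkOp K '' {α | ∃ β ∈ S, inBall (checkGraph K) β α (ℓ * S.card)})

/-! ### Words and operator-collections -/

/-- A word: a quadruple of pairwise disjoint subsets of the checks,
labelled (+, -, excited, ground). -/
structure Word (E : Type) where
  p : Finset E
  m : Finset E
  e : Finset E
  g : Finset E
  hpm : Disjoint p m
  hpe : Disjoint p e
  hpg : Disjoint p g
  hme : Disjoint m e
  hmg : Disjoint m g
  heg : Disjoint e g

/-- The underlying set of the word. -/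
def Word.S [DecidableEq E] (w : Word E) : Finset E := w.p ∪ w.m ∪ w.e ∪ w.g

instance : Fintype (Word E) := by
  classical
  exact Fintype.ofInjective (fun w : Word E => (w.p, w.m, w.e, w.g))
    (by
      rintro ⟨a1, a2, a3, a4, _, _, _, _, _, _⟩ ⟨b1, b2, b3, b4, _, _, _, _, _, _⟩ h
      simp only [Prod.mk.injEq] at h
      obtain ⟨h1, h2, h3, h4⟩ := h
      subst h1; subst h2; subst h3; subst h4; rfl)

/-- A word is a ghost if all components except the ground one are empty. -/
def IsGhost (w : Word E) : Prop := w.p = ∅ ∧ w.m = ∅ ∧ w.e = ∅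

/-- The empty word. -/
def emptyWord (E : Type) : Word E :=
  ⟨∅, ∅, ∅, ∅, by simp, by simp, by simp, by simp, by simp, by simp⟩

/-- Left projector assignment of a word. -/
def leftP (K : Checks Λ E) (w : Word E) (α : E) : Op Λ :=
  if α ∈ w.m ∪ w.g then Gop K α else Eop K α

/-- Right projector assignment of a word. -/
def rightP (K : Checks Λ E) (w : Word E) (α : E) : Op Λ :=
  if α ∈ w.p ∪ w.g then Gop K α else Eop K α

/-- The class 𝒳_𝐒 of operators compatible with the word 𝐒. -/
def memClass (K : Checks Λ E) (w : Word E) (X : Op Λ) : Prop :=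
  ∃ Y : Op Λ,
    (∀ α : E, (opSupp Y ∩ (psupp (K.str α) : Set Λ)).Nonempty → α ∈ w.S) ∧
    X = ordProd w.S (leftP K w) * Y * ordProd w.S (rightP K w)

/-- An operator-collection: a family (O_𝐒)_𝐒 with O_𝐒 ∈ 𝒳_𝐒. -/
def IsColl (K : Checks Λ E) (O : Word E → Op Λ) : Prop :=
  ∀ w, memClass K w (O w)

/-- The intensive word norm ‖O‖_μ of an operator-collection. -/
def wordNorm (μ : ℝ) (O : Word E → Op Λ) : ℝ :=
  ⨆ α : E, ∑ w : Word E, (if α ∈ w.S then opNorm (O w) * Real.exp (μ * w.S.card) else 0)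

/-! ### The multiplication table of words -/

/-- Labels of a check in a word: none, ground, excited, raising, lowering. -/
inductive Lbl | N | G | E | P | M
deriving DecidableEq

/-- The multiplication table of labels; `none` encodes that the product vanishes. -/
def lblMul : Lbl → Lbl → Option Lbl
  | .N, x => some x
  | .G, .N => some .G
  | .G, .G => some .G
  | .G, .E => none
  | .G, .P => none
  | .G, .M => some .M
  | .E, .N => some .E
  | .E, .G => none
  | .E, .E => some .E
  | .E, .P => some .P
  | .E, .M => none
  | .P, .N => some .P
  | .P, .G => some .P
  | .P, .E => none
  | .P, .P => none
  | .P, .M => some .E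
  | .M, .N => some .M
  | .M, .G => none
  | .M, .E => some .M
  | .M, .P => some .G
  | .M, .M => none

/-- The label of a check in a word. -/
def Word.lbl [DecidableEq E] (w : Word E) (α : E) : Lbl :=
  if α ∈ w.p then .P else if α ∈ w.m then .M else if α ∈ w.e then .E
  else if α ∈ w.g then .G else .N

/-- The product of two words is defined (the corresponding operator product does not vanish
identically by the multiplication table). -/
def MulDef (w' w : Word E) : Prop :=
  ∀ α : E, lblMul (w'.lbl α) (w.lbl α) ≠ none

private lemma disj_aux {f : E → Option Lbl} {a b : Lbl} (hab : a ≠ b) :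
    Disjoint (Finset.univ.filter fun α => f α = some a)
      (Finset.univ.filter fun α => f α = some b) := by
  rw [Finset.disjoint_left]
  intro x hx hy
  simp only [Finset.mem_filter] at hx hy
  exact hab (Option.some.inj (hx.2.symm.trans hy.2))

/-- The product word 𝐒'𝐒 (meaningful when `MulDef w' w`). -/
def wmul (w' w : Word E) : Word E where
  p := Finset.univ.filter fun α => lblMul (w'.lbl α) (w.lbl α) = some .P
  m := Finset.univ.filter fun α => lblMul (w'.lbl α) (w.lbl α) = some .M
  e := Finset.univ.filter fun α => lblMul (w'.lbl α) (w.lbl α) = some .E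
  g := Finset.univ.filter fun α => lblMul (w'.lbl α) (w.lbl α) = some .G
  hpm := disj_aux (by decide)
  hpe := disj_aux (by decide)
  hpg := disj_aux (by decide)
  hme := disj_aux (by decide)
  hmg := disj_aux (by decide)
  heg := disj_aux (by decide)

/-- The commutator of two operator-collections. -/
def collComm (O O' : Word E → Op Λ) : Word E → Op Λ := fun w =>
  ∑ w1 : Word E, ∑ w2 : Word E,
    if MulDef w1 w2 ∧ wmul w1 w2 = w ∧ (w1.S ∩ w2.S).Nonempty
    then O w1 * O' w2 - O' w1 * O w2 else 0

/-- Iterated adjoint action ad_{B_k}⋯ad_{B_1}(B_0) of operator-collections. -/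
def chainAd (B : ℕ → Word E → Op Λ) : ℕ → Word E → Op Λ
  | 0 => B 0
  | k + 1 => collComm (B (k + 1)) (chainAd B k)

/-- exp(i ad_A)(B) for operator-collections, defined componentwise. -/
def expAd (A B : Word E → Op Λ) : Word E → Op Λ := fun w =>
  ∑' k : ℕ, ((Complex.I ^ k / (k.factorial : ℂ)) • ((fun C => collComm A C)^[k] B) w)

/-! ### Sequences of words -/

/-- The running products 𝐒'_i of a sequence of words. -/
def sprime (σ : ℕ → Word E) : ℕ → Word E
  | 0 => σ 0
  | i + 1 => wmul (σ (i + 1)) (sprime σ i)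

/-- The running products with ghost words skipped. -/
def sprimeG (σ : ℕ → Word E) : ℕ → Word E
  | 0 => σ 0
  | i + 1 => if IsGhost (σ (i + 1)) then sprimeG σ i else wmul (σ (i + 1)) (sprimeG σ i)

/-- Extend a finite sequence of words by the empty word. -/
def extend {k : ℕ} (σ : Fin (k + 1) → Word E) : ℕ → Word E :=
  fun i => if h : i < k + 1 then σ ⟨i, h⟩ else emptyWord E

/-! ### Pauli norms -/

/-- Size of a minimal connected set of qubits containing the support of `p`. -/
def mSize (K : Checks Λ E) (p : Λ → Fin 4) : ℕ :=
  sInf {n | ∃ T : Finset Λ, ConnIn (qubitGraph K) T ∧ psupp p ⊆ T ∧ T.card = n}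

/-- The intensive Pauli norm of an operator given by Pauli coefficients `c`. -/
def pauliNormC (K : Checks Λ E) (μ : ℝ) (c : (Λ → Fin 4) → ℂ) : ℝ :=
  ⨆ x : Λ, ∑ p : Λ → Fin 4, (if p x ≠ 0 then ‖c p‖ * Real.exp (μ * (mSize K p : ℝ)) else 0)

/-- The intensive Pauli norm of an operator. -/
def pauliNormOp (K : Checks Λ E) (μ : ℝ) (A : Op Λ) : ℝ :=
  pauliNormC K μ (pauliCoeff A)

/-- Diameter of the qubit graph. -/
def diam (K : Checks Λ E) : ℕ :=
  Finset.univ.sup fun pr : Λ × Λ => (qubitGraph K).dist pr.1 pr.2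

/-- The spectral projector of a Hermitian matrix onto the eigenvalues in [-δ, δ]. -/
def spectralProjLE {n : Type} [Fintype n] [DecidableEq n] {A : Matrix n n ℂ}
    (hA : A.IsHermitian) (δ : ℝ) : Matrix n n ℂ :=
  (hA.eigenvectorUnitary : Matrix n n ℂ) *
    Matrix.diagonal (fun i => if |hA.eigenvalues i| ≤ δ then (1 : ℂ) else 0) *
    star (hA.eigenvectorUnitary : Matrix n n ℂ)


/-! ### Auxiliary lemmas for the iterated commutator bound -/

section Aux

variable {Λ' E' : Type} [Fintype Λ'] [DecidableEq Λ'] [Fintype E'] [LinearOrder E']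

lemma opNorm_nonneg' (A : Op Λ') : 0 ≤ opNorm A := norm_nonneg _

lemma opNorm_zero' : opNorm (0 : Op Λ') = 0 := by
  simp [opNorm]

lemma opNorm_mul_le' (A B : Op Λ') : opNorm (A * B) ≤ opNorm A * opNorm B := by
  unfold opNorm; rw [_root_.map_mul]; exact norm_mul_le _ _

lemma opNorm_sub_le' (A B : Op Λ') : opNorm (A - B) ≤ opNorm A + opNorm B := by
  unfold opNorm; rw [_root_.map_sub]; exact norm_sub_le _ _

lemma opNorm_sum_le' {ι : Type*} (s : Finset ι) (f : ι → Op Λ') :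
    opNorm (∑ i ∈ s, f i) ≤ ∑ i ∈ s, opNorm (f i) := by
  unfold opNorm; rw [_root_.map_sum]; exact norm_sum_le _ _

lemma Word.mem_S' {w : Word E'} {α : E'} :
    α ∈ w.S ↔ α ∈ w.p ∨ α ∈ w.m ∨ α ∈ w.e ∨ α ∈ w.g := by
  simp [Word.S, Finset.mem_union, or_assoc]

lemma Word.lbl_eq_N {w : Word E'} {α : E'} (h : α ∉ w.S) : w.lbl α = Lbl.N := by
  rw [Word.mem_S'] at h; push_neg at h
  simp [Word.lbl, h.1, h.2.1, h.2.2.1, h.2.2.2]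

lemma wmul_S_subset (w1 w2 : Word E') : (wmul w1 w2).S ⊆ w1.S ∪ w2.S := by
  intro α hα
  by_contra hc
  rw [Finset.mem_union] at hc; push_neg at hc
  have h1 := Word.lbl_eq_N hc.1
  have h2 := Word.lbl_eq_N hc.2
  rw [Word.mem_S'] at hα
  simp only [wmul, Finset.mem_filter, Finset.mem_univ, true_and, h1, h2] at hα
  rcases hα with h | h | h | h <;> exact absurd h (by decide)

/-- The α-component of the word norm. -/
def gfun (μ : ℝ) (O : Word E' → Op Λ') (α : E') : ℝ :=
  ∑ w : Word E', if α ∈ w.S then opNorm (O w) * Real.exp (μ * w.S.card) else 0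

lemma wordNorm_eq (μ : ℝ) (O : Word E' → Op Λ') : wordNorm μ O = ⨆ α : E', gfun μ O α := rfl

lemma gfun_nonneg (μ : ℝ) (O : Word E' → Op Λ') (α : E') : 0 ≤ gfun μ O α := by
  apply Finset.sum_nonneg
  intro w _
  split
  · exact mul_nonneg (opNorm_nonneg' _) (Real.exp_nonneg _)
  · exact le_refl 0

lemma gfun_le_wordNorm (μ : ℝ) (O : Word E' → Op Λ') (α : E') :
    gfun μ O α ≤ wordNorm μ O := by
  rw [wordNorm_eq]
  exact le_ciSup (Set.Finite.bddAbove (Set.finite_range _)) α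

lemma wordNorm_nonneg (μ : ℝ) (O : Word E' → Op Λ') : 0 ≤ wordNorm μ O := by
  rw [wordNorm_eq]
  exact Real.iSup_nonneg (gfun_nonneg μ O)

lemma gfun_mono {μ ν : ℝ} (h : μ ≤ ν) (O : Word E' → Op Λ') (α : E') :
    gfun μ O α ≤ gfun ν O α := by
  apply Finset.sum_le_sum
  intro w _
  split
  · exact mul_le_mul_of_nonneg_left
      (Real.exp_le_exp.2 (mul_le_mul_of_nonneg_right h (Nat.cast_nonneg _)))
      (opNorm_nonneg' _)
  · exact le_refl 0

lemma wordNorm_mono {μ ν : ℝ} (h : μ ≤ ν) (O : Word E' → Op Λ') :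
    wordNorm μ O ≤ wordNorm ν O := by
  rw [wordNorm_eq]
  exact Real.iSup_le (fun α => (gfun_mono h O α).trans (gfun_le_wordNorm ν O α))
    (wordNorm_nonneg ν O)

lemma exp_neg_le_inv {x : ℝ} (hx : 0 < x) : Real.exp (-x) ≤ 1 / x := by
  have h1 : x ≤ Real.exp x := by linarith [Real.add_one_le_exp x]
  rw [Real.exp_neg, inv_eq_one_div]
  exact one_div_le_one_div_of_le hx h1

lemma key_exp {a b : ℝ} (hab : a < b) (n : ℕ) :
    (n : ℝ) * Real.exp (a * n) ≤ Real.exp (b * n) / (Real.exp 1 * (b - a)) := by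
  have hb : 0 < b - a := sub_pos.2 hab
  have h1 : (b - a) * n ≤ Real.exp ((b - a) * n - 1) := by
    have := Real.add_one_le_exp ((b - a) * n - 1); linarith
  rw [le_div_iff₀ (by positivity)]
  calc (n : ℝ) * Real.exp (a * n) * (Real.exp 1 * (b - a))
      = ((b - a) * n) * (Real.exp 1 * Real.exp (a * n)) := by ring
    _ ≤ Real.exp ((b - a) * n - 1) * (Real.exp 1 * Real.exp (a * n)) :=
        mul_le_mul_of_nonneg_right h1 (by positivity)
    _ = Real.exp (b * n) := by
        rw [← Real.exp_add, ← Real.exp_add]; congr 1; ring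

lemma inner_sum_le (μ : ℝ) (D : Word E' → Op Λ') (S1 : Finset E') :
    ∑ w2 : Word E',
        (if (S1 ∩ w2.S).Nonempty then opNorm (D w2) * Real.exp (μ * w2.S.card) else 0)
      ≤ S1.card * wordNorm μ D := by
  have hnn : ∀ (w2 : Word E') (β : E'), β ∈ S1 →
      0 ≤ (if β ∈ w2.S then opNorm (D w2) * Real.exp (μ * w2.S.card) else 0) := by
    intro w2 β _
    split
    · exact mul_nonneg (opNorm_nonneg' _) (Real.exp_nonneg _)
    · exact le_refl 0
  calc ∑ w2 : Word E',
        (if (S1 ∩ w2.S).Nonempty then opNorm (D w2) * Real.exp (μ * w2.S.card) else 0)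
      ≤ ∑ w2 : Word E', ∑ β ∈ S1,
          (if β ∈ w2.S then opNorm (D w2) * Real.exp (μ * w2.S.card) else 0) := by
        apply Finset.sum_le_sum
        intro w2 _
        split
        next h =>
          obtain ⟨β, hβ⟩ := h
          rw [Finset.mem_inter] at hβ
          have := Finset.single_le_sum (hnn w2) hβ.1
          simpa [hβ.2] using this
        next => exact Finset.sum_nonneg (hnn w2)
    _ = ∑ β ∈ S1, gfun μ D β := by
        rw [Finset.sum_comm]; rfl
    _ ≤ ∑ β ∈ S1, wordNorm μ D := Finset.sum_le_sum fun β _ => gfun_le_wordNorm μ D β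
    _ = S1.card * wordNorm μ D := by rw [Finset.sum_const, nsmul_eq_mul]

lemma wordNorm_le_of_lt (O : Word E' → Op Λ') {μ' μ : ℝ} (h : μ' < μ) :
    wordNorm μ' O ≤ 1 / (μ - μ') * wordNorm μ O := by
  have hδ : 0 < μ - μ' := sub_pos.2 h
  rw [wordNorm_eq]
  apply Real.iSup_le _ (mul_nonneg (by positivity) (wordNorm_nonneg μ O))
  intro α
  have hterm : ∀ w : Word E',
      (if α ∈ w.S then opNorm (O w) * Real.exp (μ' * w.S.card) else 0)
        ≤ 1 / (μ - μ') * (if α ∈ w.S then opNorm (O w) * Real.exp (μ * w.S.card) else 0) := by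
    intro w
    split
    next hw =>
      have hc : (1 : ℝ) ≤ w.S.card := by
        have := Finset.card_pos.2 ⟨α, hw⟩
        exact_mod_cast this
      have hexp : Real.exp (μ' * w.S.card) ≤ Real.exp (μ * w.S.card) * (1 / (μ - μ')) := by
        have h1 : μ' * w.S.card ≤ μ * w.S.card - (μ - μ') := by nlinarith
        calc Real.exp (μ' * w.S.card) ≤ Real.exp (μ * w.S.card - (μ - μ')) :=
              Real.exp_le_exp.2 h1
          _ = Real.exp (μ * w.S.card) * Real.exp (-(μ - μ')) := by
              rw [← Real.exp_add, sub_eq_add_neg]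
          _ ≤ Real.exp (μ * w.S.card) * (1 / (μ - μ')) :=
              mul_le_mul_of_nonneg_left (exp_neg_le_inv hδ) (Real.exp_nonneg _)
      calc opNorm (O w) * Real.exp (μ' * w.S.card)
          ≤ opNorm (O w) * (Real.exp (μ * w.S.card) * (1 / (μ - μ'))) :=
            mul_le_mul_of_nonneg_left hexp (opNorm_nonneg' _)
        _ = 1 / (μ - μ') * (opNorm (O w) * Real.exp (μ * w.S.card)) := by ring
    next => simp
  calc gfun μ' O α
      ≤ ∑ w : Word E',
          1 / (μ - μ') * (if α ∈ w.S then opNorm (O w) * Real.exp (μ * w.S.card) else 0) :=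
        Finset.sum_le_sum fun w _ => hterm w
    _ = 1 / (μ - μ') * gfun μ O α := by rw [← Finset.mul_sum]; rfl
    _ ≤ 1 / (μ - μ') * wordNorm μ O :=
        mul_le_mul_of_nonneg_left (gfun_le_wordNorm μ O α) (by positivity)

lemma half_bound (A C : Word E' → Op Λ') {μ' ν : ℝ} (h0 : 0 ≤ μ') (hν : μ' < ν) (α : E') :
    ∑ w1 : Word E', ∑ w2 : Word E',
      (if α ∈ w1.S ∧ (w1.S ∩ w2.S).Nonempty then
        (opNorm (A w1) * opNorm (C w2) + opNorm (C w1) * opNorm (A w2)) *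
          (Real.exp (μ' * w1.S.card) * Real.exp (μ' * w2.S.card)) else 0)
    ≤ 2 / (Real.exp 1 * (ν - μ')) * (wordNorm ν A * wordNorm ν C) := by
  have hδ : 0 < ν - μ' := sub_pos.2 hν
  have hc : 0 < Real.exp 1 * (ν - μ') := by positivity
  have hNA := wordNorm_nonneg ν A
  have hNC := wordNorm_nonneg ν C
  have hins : ∀ w1 : Word E',
      (∑ w2 : Word E',
        (if α ∈ w1.S ∧ (w1.S ∩ w2.S).Nonempty then
          (opNorm (A w1) * opNorm (C w2) + opNorm (C w1) * opNorm (A w2)) *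
            (Real.exp (μ' * w1.S.card) * Real.exp (μ' * w2.S.card)) else 0))
      ≤ (if α ∈ w1.S then
          opNorm (A w1) * Real.exp (μ' * w1.S.card) * (w1.S.card * wordNorm μ' C)
            + opNorm (C w1) * Real.exp (μ' * w1.S.card) * (w1.S.card * wordNorm μ' A)
        else 0) := by
    intro w1
    by_cases hα1 : α ∈ w1.S
    · rw [if_pos hα1]
      have e1 : (∑ w2 : Word E',
          (if α ∈ w1.S ∧ (w1.S ∩ w2.S).Nonempty then
            (opNorm (A w1) * opNorm (C w2) + opNorm (C w1) * opNorm (A w2)) *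
              (Real.exp (μ' * w1.S.card) * Real.exp (μ' * w2.S.card)) else 0))
          = opNorm (A w1) * Real.exp (μ' * w1.S.card) *
              (∑ w2 : Word E', (if (w1.S ∩ w2.S).Nonempty then
                opNorm (C w2) * Real.exp (μ' * w2.S.card) else 0))
            + opNorm (C w1) * Real.exp (μ' * w1.S.card) *
              (∑ w2 : Word E', (if (w1.S ∩ w2.S).Nonempty then
                opNorm (A w2) * Real.exp (μ' * w2.S.card) else 0)) := by
        rw [Finset.mul_sum, Finset.mul_sum, ← Finset.sum_add_distrib]
        apply Finset.sum_congr rfl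
        intro w2 _
        by_cases hov : (w1.S ∩ w2.S).Nonempty
        · rw [if_pos ⟨hα1, hov⟩, if_pos hov, if_pos hov]; ring
        · rw [if_neg (by tauto), if_neg hov, if_neg hov]; ring
      rw [e1]
      have hnn1 : 0 ≤ opNorm (A w1) * Real.exp (μ' * w1.S.card) :=
        mul_nonneg (opNorm_nonneg' _) (Real.exp_nonneg _)
      have hnn2 : 0 ≤ opNorm (C w1) * Real.exp (μ' * w1.S.card) :=
        mul_nonneg (opNorm_nonneg' _) (Real.exp_nonneg _)
      exact add_le_add
        (mul_le_mul_of_nonneg_left (inner_sum_le μ' C w1.S) hnn1)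
        (mul_le_mul_of_nonneg_left (inner_sum_le μ' A w1.S) hnn2)
    · rw [if_neg hα1]
      apply le_of_eq
      apply Finset.sum_eq_zero
      intro w2 _
      rw [if_neg (by tauto)]
  calc ∑ w1 : Word E', ∑ w2 : Word E',
        (if α ∈ w1.S ∧ (w1.S ∩ w2.S).Nonempty then
          (opNorm (A w1) * opNorm (C w2) + opNorm (C w1) * opNorm (A w2)) *
            (Real.exp (μ' * w1.S.card) * Real.exp (μ' * w2.S.card)) else 0)
      ≤ ∑ w1 : Word E',
          (if α ∈ w1.S then
            opNorm (A w1) * Real.exp (μ' * w1.S.card) * (w1.S.card * wordNorm μ' C)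
              + opNorm (C w1) * Real.exp (μ' * w1.S.card) * (w1.S.card * wordNorm μ' A)
          else 0) := Finset.sum_le_sum fun w1 _ => hins w1
    _ ≤ ∑ w1 : Word E',
          ((if α ∈ w1.S then opNorm (A w1) * Real.exp (ν * w1.S.card) else 0) *
              (wordNorm ν C / (Real.exp 1 * (ν - μ')))
            + (if α ∈ w1.S then opNorm (C w1) * Real.exp (ν * w1.S.card) else 0) *
              (wordNorm ν A / (Real.exp 1 * (ν - μ')))) := by
        apply Finset.sum_le_sum
        intro w1 _
        by_cases hα1 : α ∈ w1.S
        · rw [if_pos hα1, if_pos hα1, if_pos hα1]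
          have hkey := key_exp hν w1.S.card
          have hCm : wordNorm μ' C ≤ wordNorm ν C := wordNorm_mono hν.le C
          have hAm : wordNorm μ' A ≤ wordNorm ν A := wordNorm_mono hν.le A
          have hmix : ∀ (a nC NC : ℝ), 0 ≤ a → 0 ≤ nC → nC ≤ NC →
              a * Real.exp (μ' * w1.S.card) * ((w1.S.card : ℝ) * nC)
                ≤ a * Real.exp (ν * w1.S.card) * (NC / (Real.exp 1 * (ν - μ'))) := by
            intro a nC NC ha hn hle
            calc a * Real.exp (μ' * w1.S.card) * ((w1.S.card : ℝ) * nC)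
                = a * (((w1.S.card : ℝ) * Real.exp (μ' * w1.S.card)) * nC) := by ring
              _ ≤ a * ((Real.exp (ν * w1.S.card) / (Real.exp 1 * (ν - μ'))) * NC) := by
                  apply mul_le_mul_of_nonneg_left _ ha
                  exact mul_le_mul hkey hle hn (by positivity)
              _ = a * Real.exp (ν * w1.S.card) * (NC / (Real.exp 1 * (ν - μ'))) := by ring
          exact add_le_add
            (hmix _ _ _ (opNorm_nonneg' _) (wordNorm_nonneg μ' C) hCm)
            (hmix _ _ _ (opNorm_nonneg' _) (wordNorm_nonneg μ' A) hAm)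
        · rw [if_neg hα1, if_neg hα1, if_neg hα1]
          simp
    _ = gfun ν A α * (wordNorm ν C / (Real.exp 1 * (ν - μ')))
          + gfun ν C α * (wordNorm ν A / (Real.exp 1 * (ν - μ'))) := by
        rw [Finset.sum_add_distrib, ← Finset.sum_mul, ← Finset.sum_mul]; rfl
    _ ≤ wordNorm ν A * (wordNorm ν C / (Real.exp 1 * (ν - μ')))
          + wordNorm ν C * (wordNorm ν A / (Real.exp 1 * (ν - μ'))) :=
        add_le_add
          (mul_le_mul_of_nonneg_right (gfun_le_wordNorm ν A α) (div_nonneg hNC hc.le))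
          (mul_le_mul_of_nonneg_right (gfun_le_wordNorm ν C α) (div_nonneg hNA hc.le))
    _ = 2 / (Real.exp 1 * (ν - μ')) * (wordNorm ν A * wordNorm ν C) := by
        ring

lemma wordNorm_collComm_le (A C : Word E' → Op Λ') {μ' ν : ℝ} (h0 : 0 ≤ μ') (hν : μ' < ν) :
    wordNorm μ' (collComm A C) ≤
      4 / (Real.exp 1 * (ν - μ')) * (wordNorm ν A * wordNorm ν C) := by
  have hδ : 0 < ν - μ' := sub_pos.2 hν
  have hc : 0 < Real.exp 1 * (ν - μ') := by positivity
  have hNA := wordNorm_nonneg ν A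
  have hNC := wordNorm_nonneg ν C
  rw [wordNorm_eq]
  apply Real.iSup_le _ (mul_nonneg (by positivity) (mul_nonneg hNA hNC))
  intro α
  have hqnn : ∀ w1 w2 : Word E',
      0 ≤ opNorm (A w1) * opNorm (C w2) + opNorm (C w1) * opNorm (A w2) := fun w1 w2 =>
    add_nonneg (mul_nonneg (opNorm_nonneg' _) (opNorm_nonneg' _))
      (mul_nonneg (opNorm_nonneg' _) (opNorm_nonneg' _))
  -- Step 1: bound the operator norm of each component of the commutator
  have h1 : ∀ w : Word E', opNorm (collComm A C w) ≤
      ∑ w1 : Word E', ∑ w2 : Word E',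
        (if MulDef w1 w2 ∧ wmul w1 w2 = w ∧ (w1.S ∩ w2.S).Nonempty then
          opNorm (A w1) * opNorm (C w2) + opNorm (C w1) * opNorm (A w2) else 0) := by
    intro w
    simp only [collComm]
    refine (opNorm_sum_le' _ _).trans (Finset.sum_le_sum fun w1 _ =>
      (opNorm_sum_le' _ _).trans (Finset.sum_le_sum fun w2 _ => ?_))
    split
    next =>
      exact (opNorm_sub_le' _ _).trans
        (add_le_add (opNorm_mul_le' _ _) (opNorm_mul_le' _ _))
    next => rw [opNorm_zero']
  -- Step 2: per-triple bound reorganizing the sums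
  have hval : ∀ w w1 w2 : Word E',
      (if α ∈ w.S then
        (if MulDef w1 w2 ∧ wmul w1 w2 = w ∧ (w1.S ∩ w2.S).Nonempty then
          opNorm (A w1) * opNorm (C w2) + opNorm (C w1) * opNorm (A w2) else 0)
          * Real.exp (μ' * w.S.card) else 0)
      ≤ (if w = wmul w1 w2 then
          (if (α ∈ w1.S ∨ α ∈ w2.S) ∧ (w1.S ∩ w2.S).Nonempty then
            (opNorm (A w1) * opNorm (C w2) + opNorm (C w1) * opNorm (A w2)) *
              (Real.exp (μ' * w1.S.card) * Real.exp (μ' * w2.S.card)) else 0) else 0) := by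
    intro w w1 w2
    have hRnn : (0:ℝ) ≤ (if w = wmul w1 w2 then
        (if (α ∈ w1.S ∨ α ∈ w2.S) ∧ (w1.S ∩ w2.S).Nonempty then
          (opNorm (A w1) * opNorm (C w2) + opNorm (C w1) * opNorm (A w2)) *
            (Real.exp (μ' * w1.S.card) * Real.exp (μ' * w2.S.card)) else 0) else 0) := by
      split
      · split
        · exact mul_nonneg (hqnn w1 w2) (by positivity)
        · exact le_refl 0
      · exact le_refl 0
    by_cases hw : α ∈ w.S
    · rw [if_pos hw]
      by_cases hcond : MulDef w1 w2 ∧ wmul w1 w2 = w ∧ (w1.S ∩ w2.S).Nonempty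
      · obtain ⟨hmd, hww, hovl⟩ := hcond
        subst hww
        rw [if_pos ⟨hmd, rfl, hovl⟩, if_pos rfl]
        have hmem : α ∈ w1.S ∪ w2.S := wmul_S_subset w1 w2 hw
        rw [Finset.mem_union] at hmem
        rw [if_pos ⟨hmem, hovl⟩]
        apply mul_le_mul_of_nonneg_left _ (hqnn w1 w2)
        rw [← Real.exp_add]
        apply Real.exp_le_exp.2
        have hcard : ((wmul w1 w2).S.card : ℝ) ≤ (w1.S.card : ℝ) + (w2.S.card : ℝ) := by
          have h1 : (wmul w1 w2).S.card ≤ (w1.S ∪ w2.S).card :=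
            Finset.card_le_card (wmul_S_subset w1 w2)
          have h2 := Finset.card_union_le w1.S w2.S
          exact_mod_cast h1.trans h2
        calc μ' * ((wmul w1 w2).S.card : ℝ)
            ≤ μ' * ((w1.S.card : ℝ) + (w2.S.card : ℝ)) :=
              mul_le_mul_of_nonneg_left hcard h0
          _ = μ' * w1.S.card + μ' * w2.S.card := by ring
      · rw [if_neg hcond, zero_mul]
        exact hRnn
    · rw [if_neg hw]
      exact hRnn
  -- Assemble
  calc gfun μ' (collComm A C) α
      ≤ ∑ w : Word E',
          (if α ∈ w.S then
            (∑ w1 : Word E', ∑ w2 : Word E',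
              (if MulDef w1 w2 ∧ wmul w1 w2 = w ∧ (w1.S ∩ w2.S).Nonempty then
                opNorm (A w1) * opNorm (C w2) + opNorm (C w1) * opNorm (A w2) else 0))
              * Real.exp (μ' * w.S.card) else 0) := by
        apply Finset.sum_le_sum
        intro w _
        split
        next => exact mul_le_mul_of_nonneg_right (h1 w) (Real.exp_nonneg _)
        next => exact le_refl 0
    _ = ∑ w : Word E', ∑ w1 : Word E', ∑ w2 : Word E',
          (if α ∈ w.S then
            (if MulDef w1 w2 ∧ wmul w1 w2 = w ∧ (w1.S ∩ w2.S).Nonempty then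
              opNorm (A w1) * opNorm (C w2) + opNorm (C w1) * opNorm (A w2) else 0)
              * Real.exp (μ' * w.S.card) else 0) := by
        apply Finset.sum_congr rfl
        intro w _
        split
        next =>
          rw [Finset.sum_mul]
          apply Finset.sum_congr rfl
          intro w1 _
          rw [Finset.sum_mul]
        next => simp
    _ ≤ ∑ w : Word E', ∑ w1 : Word E', ∑ w2 : Word E',
          (if w = wmul w1 w2 then
            (if (α ∈ w1.S ∨ α ∈ w2.S) ∧ (w1.S ∩ w2.S).Nonempty then
              (opNorm (A w1) * opNorm (C w2) + opNorm (C w1) * opNorm (A w2)) *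
                (Real.exp (μ' * w1.S.card) * Real.exp (μ' * w2.S.card)) else 0) else 0) :=
        Finset.sum_le_sum fun w _ => Finset.sum_le_sum fun w1 _ =>
          Finset.sum_le_sum fun w2 _ => hval w w1 w2
    _ = ∑ w1 : Word E', ∑ w2 : Word E',
          (if (α ∈ w1.S ∨ α ∈ w2.S) ∧ (w1.S ∩ w2.S).Nonempty then
            (opNorm (A w1) * opNorm (C w2) + opNorm (C w1) * opNorm (A w2)) *
              (Real.exp (μ' * w1.S.card) * Real.exp (μ' * w2.S.card)) else 0) := by
        rw [Finset.sum_comm]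
        apply Finset.sum_congr rfl
        intro w1 _
        rw [Finset.sum_comm]
        apply Finset.sum_congr rfl
        intro w2 _
        simp
    _ ≤ ∑ w1 : Word E', ∑ w2 : Word E',
          ((if α ∈ w1.S ∧ (w1.S ∩ w2.S).Nonempty then
            (opNorm (A w1) * opNorm (C w2) + opNorm (C w1) * opNorm (A w2)) *
              (Real.exp (μ' * w1.S.card) * Real.exp (μ' * w2.S.card)) else 0)
          + (if α ∈ w2.S ∧ (w1.S ∩ w2.S).Nonempty then
            (opNorm (A w1) * opNorm (C w2) + opNorm (C w1) * opNorm (A w2)) *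
              (Real.exp (μ' * w1.S.card) * Real.exp (μ' * w2.S.card)) else 0)) := by
        apply Finset.sum_le_sum
        intro w1 _
        apply Finset.sum_le_sum
        intro w2 _
        have hx : (0:ℝ) ≤ (opNorm (A w1) * opNorm (C w2) + opNorm (C w1) * opNorm (A w2)) *
            (Real.exp (μ' * w1.S.card) * Real.exp (μ' * w2.S.card)) :=
          mul_nonneg (hqnn w1 w2) (by positivity)
        have hnn1 : (0:ℝ) ≤ (if α ∈ w1.S ∧ (w1.S ∩ w2.S).Nonempty then
            (opNorm (A w1) * opNorm (C w2) + opNorm (C w1) * opNorm (A w2)) *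
              (Real.exp (μ' * w1.S.card) * Real.exp (μ' * w2.S.card)) else 0) := by
          split
          · exact hx
          · exact le_refl 0
        have hnn2 : (0:ℝ) ≤ (if α ∈ w2.S ∧ (w1.S ∩ w2.S).Nonempty then
            (opNorm (A w1) * opNorm (C w2) + opNorm (C w1) * opNorm (A w2)) *
              (Real.exp (μ' * w1.S.card) * Real.exp (μ' * w2.S.card)) else 0) := by
          split
          · exact hx
          · exact le_refl 0
        by_cases h : (α ∈ w1.S ∨ α ∈ w2.S) ∧ (w1.S ∩ w2.S).Nonempty
        · rw [if_pos h]
          rcases h.1 with hp | hp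
          · have he1 : (if α ∈ w1.S ∧ (w1.S ∩ w2.S).Nonempty then
                (opNorm (A w1) * opNorm (C w2) + opNorm (C w1) * opNorm (A w2)) *
                  (Real.exp (μ' * w1.S.card) * Real.exp (μ' * w2.S.card)) else 0)
                = (opNorm (A w1) * opNorm (C w2) + opNorm (C w1) * opNorm (A w2)) *
                  (Real.exp (μ' * w1.S.card) * Real.exp (μ' * w2.S.card)) :=
              if_pos ⟨hp, h.2⟩
            rw [he1]
            linarith
          · have he2 : (if α ∈ w2.S ∧ (w1.S ∩ w2.S).Nonempty then
                (opNorm (A w1) * opNorm (C w2) + opNorm (C w1) * opNorm (A w2)) *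
                  (Real.exp (μ' * w1.S.card) * Real.exp (μ' * w2.S.card)) else 0)
                = (opNorm (A w1) * opNorm (C w2) + opNorm (C w1) * opNorm (A w2)) *
                  (Real.exp (μ' * w1.S.card) * Real.exp (μ' * w2.S.card)) :=
              if_pos ⟨hp, h.2⟩
            rw [he2]
            linarith
        · rw [if_neg h, if_neg (by tauto), if_neg (by tauto)]
          simp
    _ = (∑ w1 : Word E', ∑ w2 : Word E',
          (if α ∈ w1.S ∧ (w1.S ∩ w2.S).Nonempty then
            (opNorm (A w1) * opNorm (C w2) + opNorm (C w1) * opNorm (A w2)) *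
              (Real.exp (μ' * w1.S.card) * Real.exp (μ' * w2.S.card)) else 0))
        + (∑ w1 : Word E', ∑ w2 : Word E',
          (if α ∈ w2.S ∧ (w1.S ∩ w2.S).Nonempty then
            (opNorm (A w1) * opNorm (C w2) + opNorm (C w1) * opNorm (A w2)) *
              (Real.exp (μ' * w1.S.card) * Real.exp (μ' * w2.S.card)) else 0)) := by
        rw [← Finset.sum_add_distrib]
        apply Finset.sum_congr rfl
        intro w1 _
        rw [← Finset.sum_add_distrib]
    _ ≤ 2 / (Real.exp 1 * (ν - μ')) * (wordNorm ν A * wordNorm ν C)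
        + 2 / (Real.exp 1 * (ν - μ')) * (wordNorm ν C * wordNorm ν A) := by
        apply add_le_add (half_bound A C h0 hν α)
        have hswap : (∑ w1 : Word E', ∑ w2 : Word E',
            (if α ∈ w2.S ∧ (w1.S ∩ w2.S).Nonempty then
              (opNorm (A w1) * opNorm (C w2) + opNorm (C w1) * opNorm (A w2)) *
                (Real.exp (μ' * w1.S.card) * Real.exp (μ' * w2.S.card)) else 0))
            = ∑ u1 : Word E', ∑ u2 : Word E',
              (if α ∈ u1.S ∧ (u1.S ∩ u2.S).Nonempty then
                (opNorm (C u1) * opNorm (A u2) + opNorm (A u1) * opNorm (C u2)) *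
                  (Real.exp (μ' * u1.S.card) * Real.exp (μ' * u2.S.card)) else 0) := by
          rw [Finset.sum_comm]
          apply Finset.sum_congr rfl
          intro u1 _
          apply Finset.sum_congr rfl
          intro u2 _
          rw [Finset.inter_comm u2.S u1.S]
          exact if_congr Iff.rfl (by ring) rfl
        rw [hswap]
        exact half_bound C A h0 hν α
    _ = 4 / (Real.exp 1 * (ν - μ')) * (wordNorm ν A * wordNorm ν C) := by ring

lemma numeric_ineq (k : ℕ) {δ : ℝ} (hδ : 0 < δ) :
    4 / (Real.exp 1 * (δ / (k + 2))) *
      (((k + 1).factorial : ℝ) * (2 * Real.exp 1) ^ k / (δ * (k + 1) / (k + 2)) ^ (k + 1))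
    ≤ ((k + 2).factorial : ℝ) * (2 * Real.exp 1) ^ (k + 1) / δ ^ (k + 2) := by
  have he : (0:ℝ) < Real.exp 1 := Real.exp_pos 1
  have h2e : (2:ℝ) ≤ Real.exp 1 := by linarith [Real.add_one_le_exp 1]
  have hk1 : (0:ℝ) < (k:ℝ) + 1 := by positivity
  have hk2 : (0:ℝ) < (k:ℝ) + 2 := by positivity
  have hF : (0:ℝ) < ((k + 1).factorial : ℝ) := by
    exact_mod_cast Nat.factorial_pos (k + 1)
  have hP : (0:ℝ) < (2 * Real.exp 1) ^ k := by positivity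
  have hkey : ((k:ℝ) + 2) ^ (k + 1) ≤ Real.exp 1 * ((k:ℝ) + 1) ^ (k + 1) := by
    have h1 : (1:ℝ) / ((k:ℝ) + 1) + 1 ≤ Real.exp (1 / ((k:ℝ) + 1)) :=
      Real.add_one_le_exp _
    have h2 : ((k:ℝ) + 2) ≤ ((k:ℝ) + 1) * Real.exp (1 / ((k:ℝ) + 1)) := by
      have := mul_le_mul_of_nonneg_left h1 hk1.le
      have heq : ((k:ℝ) + 1) * (1 / ((k:ℝ) + 1) + 1) = (k:ℝ) + 2 := by
        field_simp
        ring
      linarith [heq ▸ this]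
    calc ((k:ℝ) + 2) ^ (k + 1)
        ≤ (((k:ℝ) + 1) * Real.exp (1 / ((k:ℝ) + 1))) ^ (k + 1) :=
          pow_le_pow_left₀ hk2.le h2 _
      _ = ((k:ℝ) + 1) ^ (k + 1) * Real.exp (1 / ((k:ℝ) + 1)) ^ (k + 1) := mul_pow _ _ _
      _ = Real.exp 1 * ((k:ℝ) + 1) ^ (k + 1) := by
          rw [← Real.exp_nat_mul]
          rw [show ((k + 1 : ℕ) : ℝ) * (1 / ((k:ℝ) + 1)) = 1 by push_cast; field_simp]
          ring
  have ha : (0:ℝ) < ((k:ℝ) + 1) ^ (k + 1) := by positivity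
  have hb : (0:ℝ) < ((k:ℝ) + 2) ^ (k + 1) := by positivity
  have hd : (0:ℝ) < δ ^ (k + 1) := by positivity
  have hrw1 : (δ * ((k:ℝ) + 1) / ((k:ℝ) + 2)) ^ (k + 1)
      = δ ^ (k + 1) * ((k:ℝ) + 1) ^ (k + 1) / ((k:ℝ) + 2) ^ (k + 1) := by
    rw [div_pow, mul_pow]
  have hrw2 : δ ^ (k + 2) = δ ^ (k + 1) * δ := by rw [← pow_succ]
  have hrw3 : ((k + 2).factorial : ℝ) = ((k:ℝ) + 2) * ((k + 1).factorial : ℝ) := by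
    rw [show (k + 2) = (k + 1) + 1 by ring, Nat.factorial_succ]
    push_cast
    ring
  have hrw4 : (2 * Real.exp 1) ^ (k + 1) = (2 * Real.exp 1) ^ k * (2 * Real.exp 1) :=
    pow_succ _ _
  rw [hrw1, hrw2, hrw3, hrw4, div_mul_div_comm,
    div_le_div_iff₀ (by positivity) (by positivity)]
  -- reduce to an inequality among atoms
  generalize hA : ((k:ℝ) + 1) ^ (k + 1) = a at *
  generalize hB : ((k:ℝ) + 2) ^ (k + 1) = b at *
  generalize hD : δ ^ (k + 1) = d at *
  generalize hFF : ((k + 1).factorial : ℝ) = F at *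
  generalize hPP : (2 * Real.exp 1) ^ k = P at *
  have hbb : 4 * b ≤ (2 * Real.exp 1) * (Real.exp 1 * a) := by nlinarith
  have hne2 : ((k:ℝ) + 2) ≠ 0 := ne_of_gt hk2
  have hneb : b ≠ 0 := ne_of_gt hb
  field_simp
  nlinarith [hbb]

end Aux

/-- **Norm bound for iterated commutators of operator-collections.**
For operator-collections `B⁰, …, Bᵏ` and `0 ≤ μ' < μ`,
`‖ad_{Bᵏ}⋯ad_{B¹}(B⁰)‖_{μ'} ≤ (k+1)!(2e)^k/(μ−μ')^{k+1} ∏_t ‖Bᵗ‖_μ`. -/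
theorem iterated_commutator_bound {Λ E : Type} [Fintype Λ] [DecidableEq Λ] [Fintype E]
    [LinearOrder E] (K : Checks Λ E) (B : ℕ → Word E → Op Λ) (k : ℕ)
    (hB : ∀ t ≤ k, IsColl K (B t))
    (μ' μ : ℝ) (hμ0 : 0 ≤ μ') (hμ : μ' < μ) :
    wordNorm μ' (chainAd B k) ≤
      ((k + 1).factorial : ℝ) * (2 * Real.exp 1) ^ k / (μ - μ') ^ (k + 1) *
        ∏ t ∈ Finset.range (k + 1), wordNorm μ (B t) := by
  clear hB
  induction k generalizing μ' μ with
  | zero =>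
    have h := wordNorm_le_of_lt (B 0) hμ
    simpa [chainAd] using h
  | succ k ih =>
    set δ := μ - μ' with hδdef
    have hδ : 0 < δ := sub_pos.2 hμ
    set ν := μ' + δ / (k + 2) with hνdef
    have hd2 : 0 < δ / ((k:ℝ) + 2) := by positivity
    have hν1 : μ' < ν := by rw [hνdef]; linarith
    have hν2 : ν < μ := by
      have h1 : δ / ((k:ℝ) + 2) < δ := by
        rw [div_lt_iff₀ (by positivity)]
        nlinarith
      rw [hνdef]
      have : μ = μ' + δ := by rw [hδdef]; ring
      linarith
    have hν0 : 0 ≤ ν := le_trans hμ0 hν1.le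
    have hμν : μ - ν = δ * ((k:ℝ) + 1) / ((k:ℝ) + 2) := by
      rw [hνdef, hδdef]; field_simp; ring
    have hνμ' : ν - μ' = δ / ((k:ℝ) + 2) := by rw [hνdef]; ring
    have hcomm := wordNorm_collComm_le (B (k + 1)) (chainAd B k) hμ0 hν1
    have hmono := wordNorm_mono hν2.le (B (k + 1))
    have hih := ih ν μ hν0 hν2
    have hnn : 0 ≤ wordNorm ν (chainAd B k) := wordNorm_nonneg _ _
    have hBμ : 0 ≤ wordNorm μ (B (k + 1)) := wordNorm_nonneg _ _
    have hprod : 0 ≤ ∏ t ∈ Finset.range (k + 1), wordNorm μ (B t) :=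
      Finset.prod_nonneg fun t _ => wordNorm_nonneg _ _
    have hsub : 0 < ν - μ' := sub_pos.2 hν1
    have hch : chainAd B (k + 1) = collComm (B (k + 1)) (chainAd B k) := rfl
    rw [hch]
    calc wordNorm μ' (collComm (B (k + 1)) (chainAd B k))
        ≤ 4 / (Real.exp 1 * (ν - μ')) *
            (wordNorm ν (B (k + 1)) * wordNorm ν (chainAd B k)) := hcomm
      _ ≤ 4 / (Real.exp 1 * (ν - μ')) *
            (wordNorm μ (B (k + 1)) *
              (((k + 1).factorial : ℝ) * (2 * Real.exp 1) ^ k / (μ - ν) ^ (k + 1) *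
                ∏ t ∈ Finset.range (k + 1), wordNorm μ (B t))) := by
          apply mul_le_mul_of_nonneg_left _ (by positivity)
          exact mul_le_mul hmono hih hnn hBμ
      _ = (4 / (Real.exp 1 * (ν - μ')) *
            (((k + 1).factorial : ℝ) * (2 * Real.exp 1) ^ k / (μ - ν) ^ (k + 1))) *
            ((∏ t ∈ Finset.range (k + 1), wordNorm μ (B t)) * wordNorm μ (B (k + 1))) := by
          ring
      _ ≤ (((k + 2).factorial : ℝ) * (2 * Real.exp 1) ^ (k + 1) / δ ^ (k + 2)) *
            ((∏ t ∈ Finset.range (k + 1), wordNorm μ (B t)) * wordNorm μ (B (k + 1))) := by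
          apply mul_le_mul_of_nonneg_right _ (mul_nonneg hprod hBμ)
          rw [hνμ', hμν]
          exact numeric_ineq k hδ
      _ = ((k + 1 + 1).factorial : ℝ) * (2 * Real.exp 1) ^ (k + 1) / δ ^ (k + 1 + 1) *
            ∏ t ∈ Finset.range (k + 1 + 1), wordNorm μ (B t) := by
          conv_rhs => rw [Finset.prod_range_succ]

end QLDPC
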